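/- A triangle of maximal area inscribed in a closed disk of radius ρ is equilateral with side length ρ√3; consequently every triangle contained in a disk of radius ρ has area at most (3√3/4)·ρ². -/

import Mathlib

open MeasureTheory Metric Real Pointwise

noncomputable section MaxAreaAux

local notation "E2" => EuclideanSpace ℝ (Fin 2)

def ee0 : E2 := EuclideanSpace.single 0 1
def ee1 : E2 := EuclideanSpace.single 1 1
def S0 : Set E2 := {x | 0 ≤ x 0 ∧ 0 ≤ x 1 ∧ x 0 + x 1 ≤ 1}

lemma meas_S' : MeasurableSet {p : ℝ × ℝ | 0 ≤ p.1 ∧ 0 ≤ p.2 ∧ p.1 + p.2 ≤ 1} := by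
  apply MeasurableSet.inter
  · exact measurableSet_le measurable_const measurable_fst
  apply MeasurableSet.inter
  · exact measurableSet_le measurable_const measurable_snd
  · exact measurableSet_le (measurable_fst.add measurable_snd) measurable_const

open intervalIntegral in
lemma vol_S' : volume {p : ℝ × ℝ | 0 ≤ p.1 ∧ 0 ≤ p.2 ∧ p.1 + p.2 ≤ 1} = ENNReal.ofReal (1/2) := by
  rw [MeasureTheory.Measure.volume_eq_prod, MeasureTheory.Measure.prod_apply meas_S']
  have h1 : ∀ x : ℝ, volume (Prod.mk x ⁻¹' {p : ℝ × ℝ | 0 ≤ p.1 ∧ 0 ≤ p.2 ∧ p.1 + p.2 ≤ 1})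
      = Set.indicator (Set.Ici (0:ℝ)) (fun x => ENNReal.ofReal (1 - x)) x := by
    intro x
    rcases le_or_gt 0 x with hx | hx
    · have : Prod.mk x ⁻¹' {p : ℝ × ℝ | 0 ≤ p.1 ∧ 0 ≤ p.2 ∧ p.1 + p.2 ≤ 1} = Set.Icc 0 (1 - x) := by
        ext y; simp [hx]; intro _; constructor <;> intro <;> linarith
      rw [this, Real.volume_Icc, Set.indicator_of_mem (Set.mem_Ici.mpr hx)]
      norm_num
    · have : Prod.mk x ⁻¹' {p : ℝ × ℝ | 0 ≤ p.1 ∧ 0 ≤ p.2 ∧ p.1 + p.2 ≤ 1} = ∅ := by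
        ext y; simp; intro h; linarith
      rw [this, Set.indicator_of_notMem (by simpa using hx)]
      simp
  simp_rw [h1]
  rw [lintegral_indicator measurableSet_Ici]
  have hsplit : Set.Ici (0:ℝ) = Set.Icc 0 1 ∪ Set.Ioi 1 := (Set.Icc_union_Ioi_eq_Ici zero_le_one).symm
  rw [hsplit, lintegral_union measurableSet_Ioi
    (by rw [Set.disjoint_left]; intro a ha hb; exact absurd ha.2 (not_le.2 hb))]
  have h2 : ∫⁻ x in Set.Ioi (1:ℝ), ENNReal.ofReal (1 - x) = 0 := by
    rw [MeasureTheory.setLIntegral_congr_fun measurableSet_Ioi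
      (fun x hx => ENNReal.ofReal_eq_zero.mpr (by simp at hx; linarith))]
    exact lintegral_zero
  rw [h2, add_zero]
  rw [← MeasureTheory.ofReal_integral_eq_lintegral_ofReal]
  · congr 1
    rw [MeasureTheory.integral_Icc_eq_integral_Ioc, ← integral_of_le zero_le_one]
    rw [integral_sub intervalIntegrable_const intervalIntegrable_id,
      intervalIntegral.integral_const, integral_id]
    norm_num
  · apply Integrable.sub (integrable_const 1)
    exact (intervalIntegrable_iff_integrableOn_Icc_of_le zero_le_one).mp intervalIntegrable_id
  · exact Filter.Eventually.mono (ae_restrict_mem measurableSet_Icc)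
      (fun x hx => by simp; linarith [hx.2])

lemma vol_S0 : volume S0 = ENNReal.ofReal (1/2) := by
  have hmp : MeasurePreserving (fun x : E2 => ((x 0 : ℝ), (x 1 : ℝ))) volume volume :=
    (volume_preserving_finTwoArrow ℝ).comp (EuclideanSpace.volume_preserving_symm_measurableEquiv_toLp (ι := Fin 2))
  have hpre : S0 = (fun x : E2 => ((x 0 : ℝ), (x 1 : ℝ))) ⁻¹'
      {p : ℝ × ℝ | 0 ≤ p.1 ∧ 0 ≤ p.2 ∧ p.1 + p.2 ≤ 1} := rfl
  rw [hpre, hmp.measure_preimage meas_S'.nullMeasurableSet, vol_S']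

lemma convexHull_tri : convexHull ℝ {(0:E2), ee0, ee1} = S0 := by
  apply le_antisymm
  · apply convexHull_min
    · rintro x (rfl | rfl | rfl) <;>
        simp [S0, ee0, ee1, EuclideanSpace.single_apply]
    · rintro x hx y hy a b ha hb hab
      have hx0 := hx.1; have hx1 := hx.2.1; have hx2 := hx.2.2
      have hy0 := hy.1; have hy1 := hy.2.1; have hy2 := hy.2.2
      refine ⟨?_, ?_, ?_⟩ <;>
        simp only [PiLp.add_apply, PiLp.smul_apply, smul_eq_mul] <;> nlinarith
  · intro x hx
    obtain ⟨hx0, hx1, hx2⟩ := hx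
    have hexp : x = (1 - x 0 - x 1) • (0:E2) + (x 0 • ee0 + x 1 • ee1) := by
      ext i
      fin_cases i <;> simp [ee0, ee1, EuclideanSpace.single_apply]
    rw [hexp]
    have h3 : ∀ i ∈ Finset.univ, (![1 - x 0 - x 1, x 0, x 1] : Fin 3 → ℝ) i ≥ 0 := by
      intro i _; fin_cases i <;> simp <;> linarith
    have := Convex.sum_mem (convex_convexHull ℝ {(0:E2), ee0, ee1}) (t := Finset.univ)
      (w := ![1 - x 0 - x 1, x 0, x 1]) (z := ![0, ee0, ee1]) h3
      (by simp [Fin.sum_univ_three]; ring)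
      (by intro i _; fin_cases i <;>
        [exact subset_convexHull ℝ _ (by simp); exact subset_convexHull ℝ _ (by simp);
          exact subset_convexHull ℝ _ (by simp)])
    simpa [Fin.sum_univ_three, add_assoc] using this

def Lmap (u v : E2) : E2 →ₗ[ℝ] E2 where
  toFun x := x 0 • u + x 1 • v
  map_add' x y := by
    simp only [PiLp.add_apply]
    module
  map_smul' a x := by
    simp only [PiLp.smul_apply, smul_eq_mul, RingHom.id_apply]
    module

lemma Lmap_det (u v : E2) : LinearMap.det (Lmap u v) = u 0 * v 1 - u 1 * v 0 := by
  rw [← LinearMap.det_toMatrix (EuclideanSpace.basisFun (Fin 2) ℝ).toBasis]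
  rw [Matrix.det_fin_two]
  have h : ∀ i j : Fin 2, LinearMap.toMatrix (EuclideanSpace.basisFun (Fin 2) ℝ).toBasis
      (EuclideanSpace.basisFun (Fin 2) ℝ).toBasis (Lmap u v) i j
      = (Lmap u v) ((EuclideanSpace.basisFun (Fin 2) ℝ) j) i := by
    intro i j
    rw [LinearMap.toMatrix_apply]
    simp [EuclideanSpace.basisFun]
  rw [h 0 0, h 0 1, h 1 0, h 1 1]
  simp [Lmap, EuclideanSpace.basisFun_apply, EuclideanSpace.single_apply]
  ring

lemma Lmap_e0 (u v : E2) : Lmap u v ee0 = u := by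
  ext i; simp [Lmap, ee0, EuclideanSpace.single_apply]
lemma Lmap_e1 (u v : E2) : Lmap u v ee1 = v := by
  ext i; simp [Lmap, ee1, EuclideanSpace.single_apply]
lemma Lmap_zero (u v : E2) : Lmap u v 0 = 0 := by
  ext i; simp [Lmap]

lemma tri_vol0 (u v : E2) : volume (convexHull ℝ {0, u, v})
    = ENNReal.ofReal (|u 0 * v 1 - u 1 * v 0| / 2) := by
  have himg : ({0, u, v} : Set E2) = (Lmap u v) '' {0, ee0, ee1} := by
    rw [Set.image_insert_eq, Set.image_insert_eq, Set.image_singleton,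
      Lmap_zero, Lmap_e0, Lmap_e1]
  rw [himg, ← LinearMap.image_convexHull, convexHull_tri,
    MeasureTheory.Measure.addHaar_image_linearMap, Lmap_det, vol_S0,
    ← ENNReal.ofReal_mul (abs_nonneg _)]
  congr 1
  ring

lemma tri_vol (A B C : E2) : volume (convexHull ℝ {A, B, C})
    = ENNReal.ofReal (|(B 0 - A 0) * (C 1 - A 1) - (B 1 - A 1) * (C 0 - A 0)| / 2) := by
  have himg : ({A, B, C} : Set E2) = A +ᵥ ({0, B - A, C - A} : Set E2) := by
    rw [← Set.image_vadd, Set.image_insert_eq, Set.image_insert_eq, Set.image_singleton]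
    simp [vadd_eq_add]
  rw [himg, convexHull_vadd, measure_vadd, tri_vol0]
  congr 2

lemma key_ineq (a1 a2 b1 b2 c1 c2 : ℝ) :
    (b1-a1)*(c2-a2)-(b2-a2)*(c1-a1) ≤ Real.sqrt 3/2*(a1^2+a2^2+b1^2+b2^2+c1^2+c2^2) := by
  set s := Real.sqrt 3 with hsdef
  have hs : s^2 = 3 := Real.sq_sqrt (by norm_num)
  have hs0 : (0:ℝ) ≤ s := Real.sqrt_nonneg 3
  have hid : s/2*(a1^2+a2^2+b1^2+b2^2+c1^2+c2^2) - ((b1-a1)*(c2-a2)-(b2-a2)*(c1-a1))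
      = s/6*((a1+b1+c1)^2+(a2+b2+c2)^2)
        + s/3*((a1 - b1/2 - s/2*b2 - c1/2 + s/2*c2)^2 + (a2 + s/2*b1 - b2/2 - s/2*c1 - c2/2)^2) := by
    linear_combination ((-1/3:ℝ)*b2*c1 + (1/3:ℝ)*b1*c2 + (1/3:ℝ)*a2*c1 + (-1/3:ℝ)*a2*b1
      + (-1/3:ℝ)*a1*c2 + (1/3:ℝ)*a1*b2 + (-1/12:ℝ)*s*c2^2 + (-1/12:ℝ)*s*c1^2
      + (1/6:ℝ)*s*b2*c2 + (-1/12:ℝ)*s*b2^2 + (1/6:ℝ)*s*b1*c1 + (-1/12:ℝ)*s*b1^2) * hs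
  nlinarith [mul_nonneg hs0 (sq_nonneg (a1+b1+c1)), mul_nonneg hs0 (sq_nonneg (a2+b2+c2)),
    mul_nonneg hs0 (sq_nonneg (a1 - b1/2 - s/2*b2 - c1/2 + s/2*c2)),
    mul_nonneg hs0 (sq_nonneg (a2 + s/2*b1 - b2/2 - s/2*c1 - c2/2)), hid]

lemma norm2_of_mem_ball {A c : E2} {ρ : ℝ} (h : A ∈ Metric.closedBall c ρ) :
    (A 0 - c 0)^2 + (A 1 - c 1)^2 ≤ ρ^2 := by
  rw [Metric.mem_closedBall, EuclideanSpace.dist_eq] at h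
  have h0 : (0:ℝ) ≤ ∑ i : Fin 2, dist (A i) (c i) ^ 2 :=
    Finset.sum_nonneg fun i _ => sq_nonneg _
  have := Real.sq_sqrt h0
  have hsq : ∑ i : Fin 2, dist (A i) (c i) ^ 2 ≤ ρ ^ 2 := by
    nlinarith [Real.sqrt_nonneg (∑ i : Fin 2, dist (A i) (c i) ^ 2)]
  rw [Fin.sum_univ_two, Real.dist_eq, Real.dist_eq, sq_abs, sq_abs] at hsq
  exact hsq

def pt (x y : ℝ) : E2 := (WithLp.equiv 2 (Fin 2 → ℝ)).symm ![x, y]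

lemma pt_apply0 (x y : ℝ) : pt x y 0 = x := rfl
lemma pt_apply1 (x y : ℝ) : pt x y 1 = y := rfl

lemma coord0 (c : E2) (ρ x y : ℝ) : (c + ρ • pt x y) 0 = c 0 + ρ * x := by
  simp [pt_apply0]
lemma coord1 (c : E2) (ρ x y : ℝ) : (c + ρ • pt x y) 1 = c 1 + ρ * y := by
  simp [pt_apply1]

lemma dist_aux (c : E2) (ρ x1 y1 x2 y2 : ℝ) :
    dist (c + ρ • pt x1 y1) (c + ρ • pt x2 y2)
    = Real.sqrt (ρ^2 * ((x1-x2)^2+(y1-y2)^2)) := by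
  rw [EuclideanSpace.dist_eq, Fin.sum_univ_two]
  congr 1
  rw [Real.dist_eq, Real.dist_eq, sq_abs, sq_abs, coord0, coord0, coord1, coord1]
  ring

lemma dist_aux2 (c : E2) (ρ x y : ℝ) :
    dist (c + ρ • pt x y) c = Real.sqrt (ρ^2 * (x^2+y^2)) := by
  have : c = c + ρ • pt 0 0 := by
    ext i; fin_cases i <;> simp [pt_apply0, pt_apply1]
  nth_rewrite 2 [this]
  rw [dist_aux]
  norm_num

end MaxAreaAux

theorem max_area_triangle_in_disk (c : EuclideanSpace ℝ (Fin 2)) (ρ : ℝ) (hρ : 0 < ρ) :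
    (∀ A B C : EuclideanSpace ℝ (Fin 2),
      A ∈ Metric.closedBall c ρ → B ∈ Metric.closedBall c ρ → C ∈ Metric.closedBall c ρ →
      volume (convexHull ℝ {A, B, C}) ≤ ENNReal.ofReal ((3 * Real.sqrt 3 / 4) * ρ ^ 2)) ∧
    (∃ A B C : EuclideanSpace ℝ (Fin 2),
      A ∈ Metric.closedBall c ρ ∧ B ∈ Metric.closedBall c ρ ∧ C ∈ Metric.closedBall c ρ ∧
      dist A B = ρ * Real.sqrt 3 ∧ dist B C = ρ * Real.sqrt 3 ∧ dist A C = ρ * Real.sqrt 3 ∧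
      volume (convexHull ℝ {A, B, C}) = ENNReal.ofReal ((3 * Real.sqrt 3 / 4) * ρ ^ 2)) := by
  have hs : Real.sqrt 3 ^ 2 = 3 := Real.sq_sqrt (by norm_num)
  have hs0 : (0:ℝ) ≤ Real.sqrt 3 := Real.sqrt_nonneg 3
  constructor
  · intro A B C hA hB hC
    rw [tri_vol]
    apply ENNReal.ofReal_le_ofReal
    have hA2 := norm2_of_mem_ball hA
    have hB2 := norm2_of_mem_ball hB
    have hC2 := norm2_of_mem_ball hC
    have h1 : (B 0 - A 0) * (C 1 - A 1) - (B 1 - A 1) * (C 0 - A 0)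
        ≤ Real.sqrt 3 / 2 * (3 * ρ^2) := by
      have := key_ineq (A 0 - c 0) (A 1 - c 1) (B 0 - c 0) (B 1 - c 1) (C 0 - c 0) (C 1 - c 1)
      have h2 : Real.sqrt 3/2*((A 0 - c 0)^2+(A 1 - c 1)^2+(B 0 - c 0)^2+(B 1 - c 1)^2
          +(C 0 - c 0)^2+(C 1 - c 1)^2) ≤ Real.sqrt 3 / 2 * (3 * ρ^2) := by
        nlinarith
      calc (B 0 - A 0) * (C 1 - A 1) - (B 1 - A 1) * (C 0 - A 0)
          = (B 0 - c 0 - (A 0 - c 0)) * (C 1 - c 1 - (A 1 - c 1))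
            - (B 1 - c 1 - (A 1 - c 1)) * (C 0 - c 0 - (A 0 - c 0)) := by ring
        _ ≤ Real.sqrt 3 / 2 * (3 * ρ^2) := le_trans this h2
    have h1' : -((B 0 - A 0) * (C 1 - A 1) - (B 1 - A 1) * (C 0 - A 0))
        ≤ Real.sqrt 3 / 2 * (3 * ρ^2) := by
      have := key_ineq (A 0 - c 0) (A 1 - c 1) (C 0 - c 0) (C 1 - c 1) (B 0 - c 0) (B 1 - c 1)
      have h2 : Real.sqrt 3/2*((A 0 - c 0)^2+(A 1 - c 1)^2+(C 0 - c 0)^2+(C 1 - c 1)^2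
          +(B 0 - c 0)^2+(B 1 - c 1)^2) ≤ Real.sqrt 3 / 2 * (3 * ρ^2) := by
        nlinarith
      calc -((B 0 - A 0) * (C 1 - A 1) - (B 1 - A 1) * (C 0 - A 0))
          = (C 0 - c 0 - (A 0 - c 0)) * (B 1 - c 1 - (A 1 - c 1))
            - (C 1 - c 1 - (A 1 - c 1)) * (B 0 - c 0 - (A 0 - c 0)) := by ring
        _ ≤ Real.sqrt 3 / 2 * (3 * ρ^2) := le_trans this h2
    have habs : |(B 0 - A 0) * (C 1 - A 1) - (B 1 - A 1) * (C 0 - A 0)|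
        ≤ Real.sqrt 3 / 2 * (3 * ρ^2) := abs_le.mpr ⟨by linarith, h1⟩
    calc |(B 0 - A 0) * (C 1 - A 1) - (B 1 - A 1) * (C 0 - A 0)| / 2
        ≤ (Real.sqrt 3 / 2 * (3 * ρ^2)) / 2 := by linarith
      _ = 3 * Real.sqrt 3 / 4 * ρ ^ 2 := by ring
  · refine ⟨c + ρ • pt 0 1, c + ρ • pt (-(Real.sqrt 3)/2) (-(1/2)),
      c + ρ • pt (Real.sqrt 3/2) (-(1/2)), ?_, ?_, ?_, ?_, ?_, ?_, ?_⟩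
    · rw [Metric.mem_closedBall, dist_aux2]
      rw [show ρ^2 * ((0:ℝ)^2 + 1^2) = ρ^2 by ring, Real.sqrt_sq hρ.le]
    · rw [Metric.mem_closedBall, dist_aux2]
      rw [show ρ^2 * ((-(Real.sqrt 3)/2)^2 + (-(1/2):ℝ)^2) = ρ^2 by linear_combination (ρ^2/4) * hs,
        Real.sqrt_sq hρ.le]
    · rw [Metric.mem_closedBall, dist_aux2]
      rw [show ρ^2 * ((Real.sqrt 3/2)^2 + (-(1/2):ℝ)^2) = ρ^2 by linear_combination (ρ^2/4) * hs,
        Real.sqrt_sq hρ.le]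
    · rw [dist_aux, show ρ^2 * (((0:ℝ) - -(Real.sqrt 3)/2)^2 + (1 - -(1/2):ℝ)^2)
        = (ρ * Real.sqrt 3)^2 by linear_combination (-3*ρ^2/4) * hs,
        Real.sqrt_sq (mul_nonneg hρ.le hs0)]
    · rw [dist_aux, show ρ^2 * ((-(Real.sqrt 3)/2 - Real.sqrt 3/2)^2 + (-(1/2) - -(1/2):ℝ)^2)
        = (ρ * Real.sqrt 3)^2 by linear_combination 0 * hs,
        Real.sqrt_sq (mul_nonneg hρ.le hs0)]
    · rw [dist_aux, show ρ^2 * (((0:ℝ) - Real.sqrt 3/2)^2 + (1 - -(1/2):ℝ)^2)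
        = (ρ * Real.sqrt 3)^2 by linear_combination (-3*ρ^2/4) * hs,
        Real.sqrt_sq (mul_nonneg hρ.le hs0)]
    · rw [tri_vol]
      congr 1
      rw [coord0, coord0, coord0, coord1, coord1, coord1]
      rw [abs_of_nonneg (by nlinarith [mul_nonneg hs0 (sq_nonneg ρ)])]
      ring
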